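/- A priori bound for graph ∞-harmonic functions: under the same connectivity hypotheses, if u : X → ℝ satisfies L u(x) = 0 for all x ∈ X \ O and u = g on O, then min_O g ≤ u(x) ≤ max_O g for every x ∈ X. -/

import Mathlib

open Finset

/-- The graph ∞-Laplacian on a finite vertex set. -/
noncomputable def graphInfLap {V : Type*} [Fintype V] [Nonempty V]
    (w : V → V → ℝ) (u : V → ℝ) (x : V) : ℝ :=
  Finset.univ.sup' Finset.univ_nonempty (fun y => w x y * (u y - u x)) +
  Finset.univ.inf' Finset.univ_nonempty (fun y => w x y * (u y - u x))

/-- The graph is connected to the boundary set `O`. -/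
def graphConnectedTo {V : Type*} (w : V → V → ℝ) (O : Finset V) : Prop :=
  ∀ x : V, x ∉ O → ∃ y ∈ O, Relation.ReflTransGen (fun a b => 0 < w a b) x y

lemma my_sup'_neg {V : Type*} (s : Finset V) (hs : s.Nonempty) (f : V → ℝ) :
    s.sup' hs (fun x => -f x) = - s.inf' hs f := by
  apply le_antisymm
  · exact Finset.sup'_le _ _ fun b hb => neg_le_neg (Finset.inf'_le _ hb)
  · rw [neg_le]
    exact Finset.le_inf' _ _ fun b hb => by
      have := Finset.le_sup' (fun x => -f x) hb
      linarith
/-- Upper bound half. -/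
lemma graphInfLap_upper {V : Type*} [Fintype V] [Nonempty V]
    (w : V → V → ℝ) (hw : ∀ x y, 0 ≤ w x y)
    (O : Finset V) (hO : O.Nonempty) (hconn : graphConnectedTo w O)
    (u g : V → ℝ)
    (hu : ∀ x : V, x ∉ O → graphInfLap w u x = 0)
    (hbc : ∀ x ∈ O, u x = g x) :
    ∀ x : V, u x ≤ O.sup' hO g := by
  set M := Finset.univ.sup' Finset.univ_nonempty u with hM
  have hle : ∀ x : V, u x ≤ M := fun x => Finset.le_sup' u (Finset.mem_univ x)
  suffices h : M ≤ O.sup' hO g by intro x; exact (hle x).trans h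
  obtain ⟨x₀, -, hx₀⟩ := Finset.exists_mem_eq_sup' Finset.univ_nonempty u
  -- key claim: from any a with u a = M connected to b ∈ O, conclude
  have key : ∀ a b : V, Relation.ReflTransGen (fun a b => 0 < w a b) a b →
      b ∈ O → u a = M → M ≤ O.sup' hO g := by
    intro a b hab hbO
    induction hab using Relation.ReflTransGen.head_induction_on with
    | refl =>
      intro hbM
      calc M = u b := hbM.symm
        _ = g b := hbc b hbO
        _ ≤ O.sup' hO g := Finset.le_sup' g hbO
    | head hac hcb ih =>
      rename_i a c
      intro haM
      by_cases haO : a ∈ O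
      · calc M = u a := haM.symm
          _ = g a := hbc a haO
          _ ≤ O.sup' hO g := Finset.le_sup' g haO
      · -- propagate the max across the edge a → c
        have hlap := hu a haO
        unfold graphInfLap at hlap
        set S := Finset.univ.sup' Finset.univ_nonempty (fun y => w a y * (u y - u a)) with hS
        set I := Finset.univ.inf' Finset.univ_nonempty (fun y => w a y * (u y - u a)) with hI
        have hSle : S ≤ 0 := by
          apply Finset.sup'_le
          intro y _
          have : u y - u a ≤ 0 := by have := hle y; linarith [haM ▸ this]
          exact mul_nonpos_of_nonneg_of_nonpos (hw a y) this
        have hIS : I ≤ S := by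
          obtain ⟨z, hz⟩ := (Finset.univ_nonempty : (Finset.univ : Finset V).Nonempty)
          exact le_trans (Finset.inf'_le _ hz) (Finset.le_sup' (fun y => w a y * (u y - u a)) hz)
        have hI0 : I = 0 := by linarith
        have hwc : (0:ℝ) ≤ w a c * (u c - u a) := by
          have := Finset.inf'_le (fun y => w a y * (u y - u a)) (Finset.mem_univ c)
          rw [← hI, hI0] at this; linarith
        have hucM : u c = M := by
          have h1 : 0 ≤ u c - u a := nonneg_of_mul_nonneg_right hwc hac
          have := hle c
          linarith [haM ▸ h1]
        exact ih hucM
  by_cases hx₀O : x₀ ∈ O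
  · calc M = u x₀ := hx₀
      _ = g x₀ := hbc x₀ hx₀O
      _ ≤ O.sup' hO g := Finset.le_sup' g hx₀O
  · obtain ⟨y, hyO, hpath⟩ := hconn x₀ hx₀O
    exact key x₀ y hpath hyO hx₀.symm

/-- A priori bound: a graph ∞-harmonic function with boundary data `g` on `O` is bounded
between the min and max of `g` over `O`. -/
theorem graphInfLap_apriori_bound {V : Type*} [Fintype V] [Nonempty V]
    (w : V → V → ℝ) (hw : ∀ x y, 0 ≤ w x y) (hsym : ∀ x y, w x y = w y x)
    (O : Finset V) (hO : O.Nonempty) (hconn : graphConnectedTo w O)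
    (u g : V → ℝ)
    (hu : ∀ x : V, x ∉ O → graphInfLap w u x = 0)
    (hbc : ∀ x ∈ O, u x = g x) :
    ∀ x : V, O.inf' hO g ≤ u x ∧ u x ≤ O.sup' hO g := by
  have hupper := graphInfLap_upper w hw O hO hconn u g hu hbc
  have hneg : ∀ x : V, x ∉ O → graphInfLap w (fun y => -u y) x = 0 := by
    intro x hx
    have hlap := hu x hx
    unfold graphInfLap at hlap ⊢
    have e : (fun y => w x y * (-u y - -u x)) = (fun y => -(w x y * (u y - u x))) := by
      funext y; ring
    rw [e, my_sup'_neg]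
    have e2 : Finset.univ.inf' Finset.univ_nonempty (fun y => -(w x y * (u y - u x)))
        = - Finset.univ.sup' Finset.univ_nonempty (fun y => w x y * (u y - u x)) := by
      rw [← neg_neg (Finset.univ.inf' Finset.univ_nonempty fun y => -(w x y * (u y - u x))),
        ← my_sup'_neg]
      simp
    rw [e2]
    linarith
  have hlower := graphInfLap_upper w hw O hO hconn (fun y => -u y) (fun y => -g y) hneg
    (fun x hx => by simp [hbc x hx])
  intro x
  refine ⟨?_, hupper x⟩
  have := hlower x
  rw [my_sup'_neg] at this
  linarith
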